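/- Let u: [a,b] → ℝ be continuous on [a,b] and differentiable on (a,b), suppose the graph of u does not meet the chord joining (a, u(a)) and (b, u(b)) at any interior point of (a,b), and suppose u'(x) → +∞ as x → a⁺. Then for every x in (a,b), u(x) > u(a) + ((u(b) − u(a))/(b − a))·(x − a); consequently, for every x in (0, b−a), u(a + x) + u(b − x) > u(a) + u(b). -/
import Mathlib


open Real

theorem stmt_10 (a b : ℝ) (hab : a < b) (u : ℝ → ℝ)
    (hcont : ContinuousOn u (Set.Icc a b))
    (hdiff : ∀ x ∈ Set.Ioo a b, DifferentiableAt ℝ u x)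
    (hderiv : Filter.Tendsto (deriv u) (nhdsWithin a (Set.Ioi a)) Filter.atTop)
    (hchord : ∀ x ∈ Set.Ioo a b,
      u x ≠ u a + (u b - u a) / (b - a) * (x - a)) :
    (∀ x ∈ Set.Ioo a b, u x > u a + (u b - u a) / (b - a) * (x - a)) ∧
    (∀ x ∈ Set.Ioo 0 (b - a), u (a + x) + u (b - x) > u a + u b) := by
  set m := (u b - u a) / (b - a) with hm
  have hev : ∀ᶠ y in nhdsWithin a (Set.Ioi a), m < deriv u y :=
    hderiv.eventually (Filter.eventually_gt_atTop m)
  obtain ⟨c, hc, hcsub⟩ := mem_nhdsGT_iff_exists_Ioo_subset.mp hev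
  set x0 := (a + min c b) / 2 with hx0def
  have hminc : a < min c b := lt_min hc hab
  have hax0 : a < x0 := by simp only [hx0def]; linarith
  have hx0c : x0 < c := by
    have : min c b ≤ c := min_le_left _ _
    simp only [hx0def]; linarith
  have hx0b : x0 < b := by
    have : min c b ≤ b := min_le_right _ _
    simp only [hx0def]; linarith
  -- MVT on [a, x0]
  have hsub1 : Set.Icc a x0 ⊆ Set.Icc a b := Set.Icc_subset_Icc le_rfl hx0b.le
  have hsub2 : Set.Ioo a x0 ⊆ Set.Ioo a b := Set.Ioo_subset_Ioo le_rfl hx0b.le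
  obtain ⟨ξ, hξ, hξeq⟩ := exists_deriv_eq_slope u hax0 (hcont.mono hsub1)
    (fun x hx => (hdiff x (hsub2 hx)).differentiableWithinAt)
  have hξm : m < deriv u ξ := hcsub ⟨hξ.1, hξ.2.trans hx0c⟩
  have hx0pos : u x0 > u a + m * (x0 - a) := by
    rw [hξeq] at hξm
    have h1 : x0 - a > 0 := by linarith
    have := (lt_div_iff₀ h1).mp hξm
    linarith
  -- main claim
  have hgcont : ContinuousOn (fun x => u x - (u a + m * (x - a))) (Set.Icc a b) :=
    hcont.sub (by fun_prop)
  have h1 : ∀ x ∈ Set.Ioo a b, u x > u a + m * (x - a) := by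
    intro x hx
    rcases lt_or_gt_of_ne (hchord x hx) with hlt | hgt
    · exfalso
      have hx0mem : x0 ∈ Set.Ioo a b := ⟨hax0, hx0b⟩
      have husub : Set.uIcc x x0 ⊆ Set.Ioo a b :=
        Set.ordConnected_Ioo.uIcc_subset hx hx0mem
      have hcont' : ContinuousOn (fun x => u x - (u a + m * (x - a))) (Set.uIcc x x0) :=
        hgcont.mono (husub.trans Set.Ioo_subset_Icc_self)
      have h0 : (0 : ℝ) ∈ Set.uIcc (u x - (u a + m * (x - a))) (u x0 - (u a + m * (x0 - a))) := by
        rw [Set.mem_uIcc]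
        left
        constructor <;> linarith
      obtain ⟨z, hz, hzeq⟩ := intermediate_value_uIcc hcont' h0
      have hzeq' : u z - (u a + m * (z - a)) = 0 := hzeq
      exact hchord z (husub hz) (by linarith)
    · exact hgt
  refine ⟨h1, ?_⟩
  intro x hx
  have hxa : a + x ∈ Set.Ioo a b := ⟨by linarith [hx.1], by linarith [hx.2]⟩
  have hxb : b - x ∈ Set.Ioo a b := ⟨by linarith [hx.2], by linarith [hx.1]⟩
  have e1 := h1 _ hxa
  have e2 := h1 _ hxb
  have hba : b - a ≠ 0 := by linarith
  have hmm : m * (b - a) = u b - u a := div_mul_cancel₀ _ hba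
  nlinarith [e1, e2]
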